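/- Define x_M(r) = x₀ + (1/φ₂)[rB·ln(rB/((δ−r)z₀)) + (δ−B)(rB/(δ−r) − z₀)] for r in an interval where rB/(δ−r) > z₀, with constants x₀ ≥ 0, φ₂, B, z₀ > 0 and δ > max(B, r). Then x_M is strictly increasing in r. -/

import Mathlib

/-- The explicit peak viral load
`x_M(r) = x₀ + (1/φ₂)[rB·ln(rB/((δ−r)z₀)) + (δ−B)(rB/(δ−r) − z₀)]`
is strictly increasing in `r` on the interval where `rB/(δ−r) > z₀`, provided
`δ > B` and `δ > r`. -/
theorem peak_viral_load_strict_mono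
    (x₀ z₀ φ₂ B δ : ℝ)
    (hx₀ : 0 ≤ x₀) (hz₀ : 0 < z₀) (hφ₂ : 0 < φ₂) (hB : 0 < B) (hδB : B < δ) :
    StrictMonoOn
      (fun r : ℝ => x₀ + (1/φ₂) *
        (r * B * Real.log (r * B / ((δ - r) * z₀))
          + (δ - B) * (r * B / (δ - r) - z₀)))
      {r : ℝ | 0 < r ∧ r < δ ∧ z₀ < r * B / (δ - r)} := by
  have hδ : 0 < δ := lt_trans hB hδB
  have hBz : 0 < B + z₀ := by linarith
  set a : ℝ := z₀ * δ / (B + z₀) with ha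
  have ha0 : 0 < a := by positivity
  have haδ : a < δ := by
    rw [ha, div_lt_iff₀ hBz]; nlinarith
  have hset : {r : ℝ | 0 < r ∧ r < δ ∧ z₀ < r * B / (δ - r)} = Set.Ioo a δ := by
    ext r
    simp only [Set.mem_setOf_eq, Set.mem_Ioo]
    constructor
    · rintro ⟨h1, h2, h3⟩
      have hdr : 0 < δ - r := by linarith
      have h4 : z₀ * (δ - r) < r * B := (lt_div_iff₀ hdr).mp h3
      refine ⟨?_, h2⟩
      rw [ha, div_lt_iff₀ hBz]; nlinarith
    · rintro ⟨h1, h2⟩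
      have h0 : 0 < r := lt_trans ha0 h1
      have hdr : 0 < δ - r := by linarith
      refine ⟨h0, h2, ?_⟩
      rw [lt_div_iff₀ hdr]
      have := (div_lt_iff₀ hBz).mp h1
      nlinarith
  rw [hset]
  apply strictMonoOn_of_deriv_pos (convex_Ioo a δ)
  · -- continuity on Ioo
    apply ContinuousOn.add continuousOn_const
    apply ContinuousOn.mul continuousOn_const
    apply ContinuousOn.add
    · apply ContinuousOn.mul (by fun_prop)
      apply ContinuousOn.log
      · fun_prop (disch := intro r hr; simp only [Set.mem_Ioo] at hr; nlinarith [hr.1, hr.2])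
      · intro r hr
        simp only [Set.mem_Ioo] at hr
        have h0 : 0 < r := lt_trans ha0 hr.1
        have hdr : 0 < δ - r := by linarith
        positivity
    · apply ContinuousOn.mul continuousOn_const
      apply ContinuousOn.sub _ continuousOn_const
      apply ContinuousOn.div (by fun_prop) (by fun_prop)
      intro r hr
      simp only [Set.mem_Ioo] at hr
      have hdr : 0 < δ - r := by linarith
      linarith
  · intro r hr
    rw [interior_Ioo] at hr
    obtain ⟨h1, h2⟩ := hr
    have h0 : 0 < r := lt_trans ha0 h1
    have hdr : 0 < δ - r := by linarith
    have harg : 0 < r * B / ((δ - r) * z₀) := by positivity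
    have harg1 : 1 < r * B / ((δ - r) * z₀) := by
      rw [lt_div_iff₀ (by positivity)]
      have := (div_lt_iff₀ hBz).mp h1
      nlinarith
    have hlogpos : 0 < Real.log (r * B / ((δ - r) * z₀)) := Real.log_pos harg1
    -- build derivative
    have hA : HasDerivAt (fun r : ℝ => r * B) B r := by
      simpa using (hasDerivAt_id r).mul_const B
    have hD : HasDerivAt (fun r : ℝ => (δ - r) * z₀) (-z₀) r := by
      simpa using ((hasDerivAt_const r δ).sub (hasDerivAt_id r)).mul_const z₀
    have hDne : (δ - r) * z₀ ≠ 0 := by positivity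
    have hQ : HasDerivAt (fun r : ℝ => r * B / ((δ - r) * z₀))
        ((B * ((δ - r) * z₀) - r * B * (-z₀)) / ((δ - r) * z₀) ^ 2) r :=
      hA.div hD hDne
    have hlog : HasDerivAt (fun r : ℝ => Real.log (r * B / ((δ - r) * z₀)))
        ((B * ((δ - r) * z₀) - r * B * (-z₀)) / ((δ - r) * z₀) ^ 2
          / (r * B / ((δ - r) * z₀))) r := hQ.log (ne_of_gt harg)
    have hT1 : HasDerivAt (fun r : ℝ => r * B * Real.log (r * B / ((δ - r) * z₀)))
        (B * Real.log (r * B / ((δ - r) * z₀)) + r * B *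
          ((B * ((δ - r) * z₀) - r * B * (-z₀)) / ((δ - r) * z₀) ^ 2
          / (r * B / ((δ - r) * z₀)))) r := hA.mul hlog
    have hD2 : HasDerivAt (fun r : ℝ => δ - r) (-1) r := by
      simpa using (hasDerivAt_id' r).const_sub δ
    have hQ2 : HasDerivAt (fun r : ℝ => r * B / (δ - r))
        ((B * (δ - r) - r * B * (-1)) / (δ - r) ^ 2) r :=
      hA.div hD2 (ne_of_gt hdr)
    have hT2 : HasDerivAt (fun r : ℝ => (δ - B) * (r * B / (δ - r) - z₀))
        ((δ - B) * ((B * (δ - r) - r * B * (-1)) / (δ - r) ^ 2)) r := by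
      simpa using ((hQ2.sub_const z₀).const_mul (δ - B))
    have hf : HasDerivAt (fun r : ℝ => x₀ + (1/φ₂) *
        (r * B * Real.log (r * B / ((δ - r) * z₀))
          + (δ - B) * (r * B / (δ - r) - z₀)))
        ((1/φ₂) * ((B * Real.log (r * B / ((δ - r) * z₀)) + r * B *
          ((B * ((δ - r) * z₀) - r * B * (-z₀)) / ((δ - r) * z₀) ^ 2
          / (r * B / ((δ - r) * z₀))))
          + (δ - B) * ((B * (δ - r) - r * B * (-1)) / (δ - r) ^ 2))) r := by
      exact ((hT1.add hT2).const_mul (1/φ₂)).const_add x₀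
    rw [hf.deriv]
    have key : (1/φ₂) * ((B * Real.log (r * B / ((δ - r) * z₀)) + r * B *
          ((B * ((δ - r) * z₀) - r * B * (-z₀)) / ((δ - r) * z₀) ^ 2
          / (r * B / ((δ - r) * z₀))))
          + (δ - B) * ((B * (δ - r) - r * B * (-1)) / (δ - r) ^ 2))
        = (1/φ₂) * (B * Real.log (r * B / ((δ - r) * z₀))
          + B * δ / (δ - r) + (δ - B) * (B * δ) / (δ - r) ^ 2) := by
      field_simp
      ring
    rw [key]
    have : 0 < B * Real.log (r * B / ((δ - r) * z₀))
          + B * δ / (δ - r) + (δ - B) * (B * δ) / (δ - r) ^ 2 := by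
      have t1 : 0 < B * Real.log (r * B / ((δ - r) * z₀)) := by positivity
      have t2 : 0 < B * δ / (δ - r) := by positivity
      have t3 : 0 < (δ - B) * (B * δ) / (δ - r) ^ 2 := by
        have : 0 < δ - B := by linarith
        positivity
      linarith
    positivity
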